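/- Let k be a field, let p', p'' ∈ k⁴ be linearly independent, and let a', a'' ∈ k⁴ be linearly independent, defining the line L = {x ∈ P³ : a'·x = a''·x = 0} (where a·x denotes Σ_i a_i x_i). Then L and the line ⟨p',p''⟩ spanned by p' and p'' have nonempty intersection in P³ if and only if D(a',a'',p',p'') = 0, where D(a',a'',p',p'') = (a'·p')(a''·p'') − (a'·p'')(a''·p'). Moreover, D, regarded as a polynomial in the 16 indeterminates given by the coordinates of a', a'', p', p'' with coefficients in k, is an irreducible polynomial. -/

import Mathlib

set_option maxHeartbeats 4000000
set_option synthInstance.maxHeartbeats 2000000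
set_option maxSynthPendingDepth 3

open MvPolynomial

lemma aux_pconst {S : Type*} [CommRing S] [IsDomain S] {d : Polynomial S} {a : S} (ha : a ≠ 0)
    (h : d ∣ Polynomial.C a) : ∃ d₀ : S, d = Polynomial.C d₀ ∧ d₀ ∣ a := by
  obtain ⟨s, hs⟩ := h
  have hca : (Polynomial.C a) ≠ 0 := by simpa using ha
  have hd : d ≠ 0 := by rintro rfl; rw [zero_mul] at hs; exact hca hs
  have hs0 : s ≠ 0 := by rintro rfl; rw [mul_zero] at hs; exact hca hs
  have hdeg : d.natDegree = 0 := by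
    have h2 := Polynomial.natDegree_mul hd hs0
    rw [← hs, Polynomial.natDegree_C] at h2
    omega
  refine ⟨d.coeff 0, Polynomial.eq_C_of_natDegree_eq_zero hdeg, ⟨s.coeff 0, ?_⟩⟩
  have := congrArg (fun p => Polynomial.coeff p 0) hs
  simpa [Polynomial.mul_coeff_zero] using this

lemma aux_mvconst {R : Type*} [CommRing R] [IsDomain R] : ∀ {n : ℕ} {d : MvPolynomial (Fin n) R} {a : R},
    a ≠ 0 → d ∣ C a → ∃ d₀ : R, d = C d₀ ∧ d₀ ∣ a := by
  intro n
  induction n with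
  | zero =>
    intro d a ha hdvd
    obtain ⟨d₀, rfl⟩ := C_surjective (Fin 0) d
    obtain ⟨s, hs⟩ := hdvd
    refine ⟨d₀, rfl, ⟨constantCoeff s, ?_⟩⟩
    have := congrArg constantCoeff hs
    simpa using this
  | succ n ih =>
    intro d a ha hdvd
    have h1 : finSuccEquiv R n d ∣ Polynomial.C (C a) := by
      have : finSuccEquiv R n (C a) = Polynomial.C (C a) := by
        simp [finSuccEquiv_apply]
      exact this ▸ (map_dvd (finSuccEquiv R n) hdvd : _)
    have hca : (C a : MvPolynomial (Fin n) R) ≠ 0 := by simpa using ha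
    obtain ⟨d₁, hd₁, hd₁a⟩ := aux_pconst hca h1
    obtain ⟨d₀, rfl, hd₀⟩ := ih ha hd₁a
    refine ⟨d₀, ?_, hd₀⟩
    have h2 : finSuccEquiv R n (C d₀) = Polynomial.C (C d₀) := by simp [finSuccEquiv_apply]
    exact (finSuccEquiv R n).injective (by rw [hd₁, h2])

lemma aux_coeff_linear {R : Type*} [CommRing R] {n : ℕ} (c : Fin n → R) (i : Fin n) :
    coeff (Finsupp.single i 1) (∑ j, C (c j) * X j) = c i := by
  rw [coeff_sum]
  simp only [coeff_C_mul, coeff_X']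
  rw [Finset.sum_eq_single i]
  · simp
  · intro j _ hj
    rw [if_neg, mul_zero]
    exact fun h => hj ((Finsupp.single_left_inj one_ne_zero).mp h)
  · simp

lemma aux_linear_ne_zero {R : Type*} [CommRing R] [Nontrivial R] {n : ℕ} (c : Fin n → R) (i : Fin n)
    (hi : c i ≠ 0) : (∑ j, C (c j) * X j : MvPolynomial (Fin n) R) ≠ 0 := by
  intro h
  apply hi
  have := aux_coeff_linear c i
  rw [h] at this
  simpa using this.symm

lemma aux_irreducible_linear {R : Type*} [CommRing R] [IsDomain R] {n : ℕ} (c : Fin (n+1) → R)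
    (h0 : c 0 ≠ 0) (hprim : ∀ r : R, (∀ i, r ∣ c i) → IsUnit r) :
    Irreducible (∑ i, C (c i) * X i : MvPolynomial (Fin (n+1)) R) := by
  set e := finSuccEquiv R n with he_def
  set g : MvPolynomial (Fin n) R := ∑ j : Fin n, C (c j.succ) * X j with hg_def
  have he : e (∑ i, C (c i) * X i) =
      Polynomial.C (C (c 0)) * Polynomial.X + Polynomial.C g := by
    rw [map_sum, Fin.sum_univ_succ]
    have h1 : ∀ i : Fin (n+1), e (C (c i) * X i) = e (C (c i)) * e (X i) := fun i => map_mul _ _ _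
    have hC : ∀ a : R, e (C a) = Polynomial.C (C a) := fun a => by simp [he_def, finSuccEquiv_apply]
    simp only [h1, hC]
    simp only [finSuccEquiv_X_zero, finSuccEquiv_X_succ, he_def]
    rw [hg_def, map_sum]
    congr 1
    exact Finset.sum_congr rfl fun j _ => by rw [map_mul]
  rw [← MulEquiv.irreducible_iff e, he]
  have hC0 : (C (c 0) : MvPolynomial (Fin n) R) ≠ 0 := by simpa using h0
  have hdeg : (Polynomial.C (C (c 0)) * Polynomial.X + Polynomial.C g).natDegree = 1 :=
    Polynomial.natDegree_linear hC0
  have hp0 : (Polynomial.C (C (c 0)) * Polynomial.X + Polynomial.C g) ≠ 0 := by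
    intro h; rw [h] at hdeg; simp at hdeg
  have key : ∀ u v : Polynomial (MvPolynomial (Fin n) R),
      Polynomial.C (C (c 0)) * Polynomial.X + Polynomial.C g = u * v → u.natDegree = 0 → IsUnit u := by
    intro u v huv hu0
    obtain ⟨r', rfl⟩ : ∃ r', u = Polynomial.C r' := ⟨u.coeff 0, Polynomial.eq_C_of_natDegree_eq_zero hu0⟩
    have hdvd : ∀ m, r' ∣ (Polynomial.C (C (c 0)) * Polynomial.X + Polynomial.C g).coeff m :=
      (Polynomial.C_dvd_iff_dvd_coeff _ _).mp ⟨v, huv⟩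
    have h1 : r' ∣ C (c 0) := by simpa using hdvd 1
    have h2 : r' ∣ g := by simpa using hdvd 0
    obtain ⟨r, rfl, hr0⟩ := aux_mvconst h0 h1
    have hrsucc : ∀ j : Fin n, r ∣ c j.succ := by
      intro j
      have := (MvPolynomial.C_dvd_iff_dvd_coeff r g).mp h2 (Finsupp.single j 1)
      rwa [hg_def, aux_coeff_linear] at this
    have : IsUnit r := hprim r (fun i => Fin.cases hr0 hrsucc i)
    exact (this.map (C : R →+* MvPolynomial (Fin n) R)).map
      (Polynomial.C : MvPolynomial (Fin n) R →+* _)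
  constructor
  · exact Polynomial.not_isUnit_of_natDegree_pos _ (by omega)
  · intro u v huv
    have hu : u ≠ 0 := by rintro rfl; rw [zero_mul] at huv; exact hp0 huv
    have hv : v ≠ 0 := by rintro rfl; rw [mul_zero] at huv; exact hp0 huv
    have hsum : u.natDegree + v.natDegree = 1 := by
      rw [← Polynomial.natDegree_mul hu hv, ← huv, hdeg]
    rcases Nat.eq_zero_or_pos u.natDegree with h | h
    · exact Or.inl (key u v huv h)
    · exact Or.inr (key v u (by rw [huv, mul_comm]) (by omega))

lemma aux_finSuccEquiv_linear {R : Type*} [CommRing R] {n : ℕ} (c : Fin (n+1) → R) :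
    finSuccEquiv R n (∑ i, C (c i) * X i) =
      Polynomial.C (C (c 0)) * Polynomial.X + Polynomial.C (∑ j : Fin n, C (c j.succ) * X j) := by
  rw [map_sum, Fin.sum_univ_succ]
  have h1 : ∀ i : Fin (n+1), finSuccEquiv R n (C (c i) * X i)
      = finSuccEquiv R n (C (c i)) * finSuccEquiv R n (X i) := fun i => map_mul _ _ _
  have hC : ∀ a : R, finSuccEquiv R n (C a) = Polynomial.C (C a) := fun a => by
    simp [finSuccEquiv_apply]
  simp only [h1, hC, finSuccEquiv_X_zero, finSuccEquiv_X_succ]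
  rw [map_sum]
  congr 1
  exact Finset.sum_congr rfl fun j _ => by rw [map_mul]

section tower
variable (k : Type*) [Field k]

local notation "T3" => MvPolynomial (Fin 4) k
local notation "T2" => MvPolynomial (Fin 4) (MvPolynomial (Fin 4) k)

noncomputable def mj (i j : Fin 4) : MvPolynomial (Fin 4) (MvPolynomial (Fin 4) k) :=
  X i * C (X j) - X j * C (X i)

lemma coeff_mj (i j : Fin 4) (h : j ≠ i) : coeff (Finsupp.single i 1) (mj k i j) = X j := by
  rw [mj, coeff_sub]
  have h1 : (X i * C (X j) : T2) = C (X j) * X i := mul_comm _ _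
  have h2 : (X j * C (X i) : T2) = C (X i) * X j := mul_comm _ _
  rw [h1, h2, coeff_C_mul, coeff_C_mul, coeff_X', coeff_X', if_pos rfl,
    if_neg (fun hh => h ((Finsupp.single_left_inj one_ne_zero).mp hh))]
  simp

lemma mj_ne_zero (i j : Fin 4) (h : j ≠ i) : mj k i j ≠ 0 := by
  intro hh
  have := coeff_mj k i j h
  rw [hh] at this
  have hXj : (X j : MvPolynomial (Fin 4) k) = 0 := by simpa using this.symm
  exact X_ne_zero j hXj

lemma mj_diag (i : Fin 4) : mj k i i = 0 := sub_self _

lemma irred_X0 : Irreducible (X 0 : T3) := by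
  have h : (X 0 : T3) = ∑ l, C (if l = 0 then (1:k) else 0) * X l := by
    simp [Fin.sum_univ_four, show (1:Fin 4) ≠ 0 by decide, show (2:Fin 4) ≠ 0 by decide,
      show (3:Fin 4) ≠ 0 by decide]
  rw [h]
  refine aux_irreducible_linear _ (by norm_num) ?_
  intro r hr
  have := hr 0
  rw [if_pos rfl] at this
  exact isUnit_of_dvd_one this

lemma irred_X1 : Irreducible (X 1 : T3) := by
  have h := (MulEquiv.irreducible_iff
    (renameEquiv k (Equiv.swap (0:Fin 4) 1))).mpr (irred_X0 k)
  rwa [renameEquiv_apply, rename_X, Equiv.swap_apply_left] at h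

lemma dvd_X_unit {r : T3} (h1 : r ∣ X 1) (h0 : r ∣ X 0) : IsUnit r := by
  obtain ⟨s, hs⟩ := h1
  rcases (irred_X1 k).isUnit_or_isUnit hs with h | h
  · exact h
  · exfalso
    have hX10 : (X 1 : T3) ∣ X 0 := by
      refine dvd_trans ?_ h0
      obtain ⟨u, rfl⟩ := h
      exact ⟨(↑u⁻¹ : T3), by rw [hs, mul_assoc, Units.mul_inv, mul_one]⟩
    have := map_dvd (aeval (fun l : Fin 4 => if l = 1 then 0 else X l) :
      T3 →ₐ[k] T3) hX10
    simp only [aeval_X] at this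
    rw [if_true, if_neg (by decide : ¬(0:Fin 4) = 1), zero_dvd_iff] at this
    exact X_ne_zero 0 this
end tower

section tower2
variable (k : Type*) [Field k]

local notation "T3" => MvPolynomial (Fin 4) k
local notation "T2" => MvPolynomial (Fin 4) (MvPolynomial (Fin 4) k)
local notation "T1" => MvPolynomial (Fin 4) (MvPolynomial (Fin 4) (MvPolynomial (Fin 4) k))

lemma mj_eq_linear : mj k 1 0 = ∑ l, C (if l = 0 then -(X 1 : T3) else if l = 1 then X 0 else 0) * X l := by
  rw [mj, Fin.sum_univ_four]
  simp [show (1:Fin 4) ≠ 0 by decide, show (2:Fin 4) ≠ 0 by decide, show (3:Fin 4) ≠ 0 by decide,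
    show (2:Fin 4) ≠ 1 by decide, show (3:Fin 4) ≠ 1 by decide]
  ring

lemma irred_mj10 : Irreducible (mj k 1 0) := by
  rw [mj_eq_linear]
  refine aux_irreducible_linear _ ?_ ?_
  · rw [if_pos rfl]
    simpa using X_ne_zero (R := k) (σ := Fin 4) 1
  · intro r hr
    have h0 := hr 0
    have h1 := hr 1
    rw [if_pos rfl, dvd_neg] at h0
    rw [if_neg (by decide : ¬(1:Fin 4) = 0), if_pos rfl] at h1
    exact dvd_X_unit k h0 h1

lemma mj_dvd_unit {r : T2} (h1 : r ∣ mj k 1 0) (h2 : r ∣ mj k 0 2) : IsUnit r := by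
  obtain ⟨s, hs⟩ := h1
  rcases (irred_mj10 k).isUnit_or_isUnit hs with h | h
  · exact h
  · exfalso
    have hdvd : mj k 1 0 ∣ mj k 0 2 := by
      refine dvd_trans ?_ h2
      obtain ⟨u, rfl⟩ := h
      exact ⟨(↑u⁻¹ : T2), by rw [hs, mul_assoc, Units.mul_inv, mul_one]⟩
    set ψ : T3 →+* T3 := (aeval (fun l : Fin 4 => if l = 1 then 0 else X l) : T3 →ₐ[k] T3).toRingHom
    set φ : T2 →+* T2 := eval₂Hom (C.comp ψ) (fun l : Fin 4 => if l = 1 then (0:T2) else X l)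
    have hφ := map_dvd φ hdvd
    have hψ1 : ψ (X 1) = 0 := by simp [ψ]
    have hψ0 : ψ (X 0) = X 0 := by
      simp only [ψ, AlgHom.toRingHom_eq_coe, RingHom.coe_coe, aeval_X]
      rw [if_neg (by decide : ¬(0:Fin 4) = 1)]
    have hψ2 : ψ (X 2) = X 2 := by
      simp only [ψ, AlgHom.toRingHom_eq_coe, RingHom.coe_coe, aeval_X]
      rw [if_neg (by decide : ¬(2:Fin 4) = 1)]
    have hφ10 : φ (mj k 1 0) = 0 := by
      rw [mj]
      simp only [map_sub, map_mul, φ, eval₂Hom_X', eval₂Hom_C, RingHom.coe_comp,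
        Function.comp_apply]
      rw [if_true, if_neg (by decide : ¬(0:Fin 4) = 1), hψ1]
      simp
    have hφ02 : φ (mj k 0 2) = mj k 0 2 := by
      rw [mj]
      simp only [map_sub, map_mul, φ, eval₂Hom_X', eval₂Hom_C, RingHom.coe_comp,
        Function.comp_apply]
      rw [if_neg (by decide : ¬(0:Fin 4) = 1), if_neg (by decide : ¬(2:Fin 4) = 1), hψ0, hψ2]
    rw [hφ10, hφ02, zero_dvd_iff] at hφ
    exact mj_ne_zero k 0 2 (by decide) hφ
end tower2

section tower3
variable (k : Type*) [Field k]

local notation "T3" => MvPolynomial (Fin 4) k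
local notation "T2" => MvPolynomial (Fin 4) (MvPolynomial (Fin 4) k)
local notation "T1" => MvPolynomial (Fin 4) (MvPolynomial (Fin 4) (MvPolynomial (Fin 4) k))
local notation "T0" => MvPolynomial (Fin 4) (MvPolynomial (Fin 4) (MvPolynomial (Fin 4) (MvPolynomial (Fin 4) k)))

noncomputable def ccp (i : Fin 4) : MvPolynomial (Fin 4) (MvPolynomial (Fin 4) (MvPolynomial (Fin 4) k)) :=
  ∑ j, C (mj k i j) * X j

lemma ccp_zero_ne : ccp k 0 ≠ 0 :=
  aux_linear_ne_zero _ 1 (mj_ne_zero k 0 1 (by decide))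

lemma top_prim : ∀ r : T1, (∀ i : Fin 4, r ∣ ccp k i) → IsUnit r := by
  intro r hr
  set e := finSuccEquiv T2 3 with he_def
  have he0 : e (ccp k 0) = Polynomial.C (∑ j : Fin 3, C (mj k 0 j.succ) * X j) := by
    rw [ccp, aux_finSuccEquiv_linear, mj_diag, C_0, Polynomial.C_0, zero_mul, zero_add]
  have he1 : e (ccp k 1) = Polynomial.C (C (mj k 1 0)) * Polynomial.X +
      Polynomial.C (∑ j : Fin 3, C (mj k 1 j.succ) * X j) := by
    rw [ccp, aux_finSuccEquiv_linear]
  have hg0 : (∑ j : Fin 3, C (mj k 0 j.succ) * X j : MvPolynomial (Fin 3) T2) ≠ 0 := by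
    refine aux_linear_ne_zero _ 0 ?_
    show mj k 0 ((0 : Fin 3).succ) ≠ 0
    exact mj_ne_zero k 0 1 (by decide)
  -- r divides ccp 0 : image divides constant
  have hd0 : e r ∣ Polynomial.C (∑ j : Fin 3, C (mj k 0 j.succ) * X j) := by
    rw [← he0]; exact map_dvd _ (hr 0)
  obtain ⟨r₁, her, hr₁⟩ := aux_pconst (S := MvPolynomial (Fin 3) (MvPolynomial (Fin 4) (MvPolynomial (Fin 4) k))) hg0 hd0
  -- r divides ccp 1 : coefficient divisibility
  have hd1 : Polynomial.C r₁ ∣ e (ccp k 1) := by rw [← her]; exact map_dvd _ (hr 1)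
  have hc1 : r₁ ∣ C (mj k 1 0) := by
    have := (Polynomial.C_dvd_iff_dvd_coeff r₁ _).mp hd1 1
    rw [he1] at hd1
    have h2 := (Polynomial.C_dvd_iff_dvd_coeff r₁ _).mp hd1 1
    simpa using h2
  obtain ⟨r₂, rfl, hr₂⟩ := aux_mvconst (mj_ne_zero k 1 0 (by decide)) hc1
  have hr₂' : r₂ ∣ mj k 0 2 := by
    have := (MvPolynomial.C_dvd_iff_dvd_coeff r₂ _).mp hr₁ (Finsupp.single 1 1)
    rw [aux_coeff_linear (fun j : Fin 3 => mj k 0 j.succ) 1] at this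
    exact this
  have hu : IsUnit r₂ := mj_dvd_unit k hr₂ hr₂'
  have : IsUnit (e r) := by
    rw [her]
    exact (hu.map (C : T2 →+* MvPolynomial (Fin 3) T2)).map
      (Polynomial.C : MvPolynomial (Fin 3) T2 →+* _)
  rwa [isUnit_map_iff] at this

lemma irred_Dt : Irreducible (∑ i, C (ccp k i) * X i : T0) :=
  aux_irreducible_linear (n := 3) (ccp k) (ccp_zero_ne k) (top_prim k)
end tower3

def rowEquiv : (Fin 4 × Fin 4) ≃ (Fin 4 ⊕ (Fin 4 ⊕ (Fin 4 ⊕ Fin 4))) where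
  toFun x := if x.1 = 0 then .inl x.2 else if x.1 = 1 then .inr (.inl x.2)
    else if x.1 = 2 then .inr (.inr (.inl x.2)) else .inr (.inr (.inr x.2))
  invFun y := match y with
    | .inl i => (0, i)
    | .inr (.inl i) => (1, i)
    | .inr (.inr (.inl i)) => (2, i)
    | .inr (.inr (.inr i)) => (3, i)
  left_inv := by decide
  right_inv := by decide

lemma sumRingEquiv_apply {R : Type*} [CommSemiring R] (S₁ S₂ : Type*) (p : MvPolynomial (S₁ ⊕ S₂) R) :
    sumRingEquiv R S₁ S₂ p = sumToIter R S₁ S₂ p := by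
  induction p using MvPolynomial.induction_on with
  | C a => rw [sumRingEquiv_C, sumToIter_C]
  | add p q hp hq => rw [map_add, map_add, hp, hq]
  | mul_X p i hp =>
    rw [map_mul, map_mul, hp]
    rcases i with i | i
    · rw [sumRingEquiv_X_inl, sumToIter_Xl]
    · rw [sumRingEquiv_X_inr, sumToIter_Xr]

section big
variable (k : Type*) [Field k]

noncomputable def bigEquiv : MvPolynomial (Fin 4 × Fin 4) k ≃+*
    MvPolynomial (Fin 4) (MvPolynomial (Fin 4) (MvPolynomial (Fin 4) (MvPolynomial (Fin 4) k))) :=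
  (renameEquiv k rowEquiv).toRingEquiv.trans <|
    (sumAlgEquiv k (Fin 4) (Fin 4 ⊕ (Fin 4 ⊕ Fin 4))).toRingEquiv.trans <|
      (mapEquiv (Fin 4) ((sumAlgEquiv k (Fin 4) (Fin 4 ⊕ Fin 4)).toRingEquiv.trans
        (mapEquiv (Fin 4) (sumAlgEquiv k (Fin 4) (Fin 4)).toRingEquiv)))

lemma bigEquiv_X0 (i : Fin 4) : bigEquiv k (X (0, i)) = X i := by
  simp [bigEquiv, rowEquiv, sumAlgEquiv_X_inl, sumAlgEquiv_X_inr, sumRingEquiv_apply, sumToIter_Xl, sumToIter_Xr]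

lemma bigEquiv_X1 (i : Fin 4) : bigEquiv k (X (1, i)) = C (X i) := by
  simp [bigEquiv, rowEquiv, sumAlgEquiv_X_inl, sumAlgEquiv_X_inr, sumRingEquiv_apply, sumToIter_Xl, sumToIter_Xr, show ¬(1:Fin 4) = 0 by decide]

lemma bigEquiv_X2 (i : Fin 4) : bigEquiv k (X (2, i)) = C (C (X i)) := by
  simp [bigEquiv, rowEquiv, sumAlgEquiv_X_inl, sumAlgEquiv_X_inr, sumRingEquiv_apply, sumToIter_Xl, sumToIter_Xr, show ¬(2:Fin 4) = 0 by decide,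
    show ¬(2:Fin 4) = 1 by decide]

lemma bigEquiv_X3 (i : Fin 4) : bigEquiv k (X (3, i)) = C (C (C (X i))) := by
  simp [bigEquiv, rowEquiv, sumAlgEquiv_X_inl, sumAlgEquiv_X_inr, sumRingEquiv_apply, sumToIter_Xl, sumToIter_Xr, show ¬(3:Fin 4) = 0 by decide,
    show ¬(3:Fin 4) = 1 by decide, show ¬(3:Fin 4) = 2 by decide]
end big

/-- The polynomial `a⁽ˢ⁾·p⁽ᵗ⁾ = Σ_i a⁽ˢ⁾_i p⁽ᵗ⁾_i` in the `16` indeterminates indexed by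
`Fin 4 × Fin 4` (the first coordinate selecting one of the four vectors
`a', a'', p', p''`, in this order). -/
noncomputable def dotPoly (k : Type*) [CommRing k] (s t : Fin 4) :
    MvPolynomial (Fin 4 × Fin 4) k :=
  ∑ i : Fin 4, X (s, i) * X (t, i)
section dpart
variable (k : Type*) [Field k]



lemma bigEquiv_D :
    bigEquiv k (dotPoly k 0 2 * dotPoly k 1 3 - dotPoly k 0 3 * dotPoly k 1 2)
      = ∑ i, C (ccp k i) * X i := by
  rw [map_sub, map_mul, map_mul, dotPoly, dotPoly, dotPoly, dotPoly,
    map_sum, map_sum, map_sum, map_sum]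
  simp only [map_mul, bigEquiv_X0, bigEquiv_X1, bigEquiv_X2, bigEquiv_X3]
  simp only [ccp, mj, map_sum, map_sub, map_mul]
  rw [Finset.sum_mul_sum, Finset.sum_mul_sum, ← Finset.sum_sub_distrib]
  refine Finset.sum_congr rfl fun i _ => ?_
  rw [Finset.sum_mul, ← Finset.sum_sub_distrib]
  refine Finset.sum_congr rfl fun j _ => ?_
  ring

lemma irred_D : Irreducible (dotPoly k 0 2 * dotPoly k 1 3 - dotPoly k 0 3 * dotPoly k 1 2) := by
  rw [← MulEquiv.irreducible_iff (bigEquiv k), bigEquiv_D]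
  exact irred_Dt k

end dpart

/-- Let `p', p''` and `a', a''` be two pairs of linearly independent
vectors of `k⁴`, the latter defining the line `L = {x : a'·x = a''·x = 0} ⊂ P³`. The lines
`L` and `⟨p', p''⟩` meet in `P³` if and only if
`D = (a'·p')(a''·p'') − (a'·p'')(a''·p') = 0`; moreover `D`, as a polynomial in the `16`
coordinates of `a', a'', p', p''` with coefficients in `k`, is irreducible. -/
theorem statement_19 (k : Type*) [Field k]
    (p' p'' a' a'' : Fin 4 → k)
    (hp : LinearIndependent k ![p', p'']) (ha : LinearIndependent k ![a', a'']) :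
    ((∃ α β : k, ¬(α = 0 ∧ β = 0) ∧
        (∑ i, a' i * (α * p' i + β * p'' i)) = 0 ∧
        (∑ i, a'' i * (α * p' i + β * p'' i)) = 0) ↔
      (∑ i, a' i * p' i) * (∑ i, a'' i * p'' i) -
        (∑ i, a' i * p'' i) * (∑ i, a'' i * p' i) = 0) ∧
    Irreducible
      (dotPoly k 0 2 * dotPoly k 1 3 - dotPoly k 0 3 * dotPoly k 1 2) := by
  constructor
  · have expand : ∀ (a : Fin 4 → k) (α β : k),
        (∑ i, a i * (α * p' i + β * p'' i)) = (∑ i, a i * p' i) * α + (∑ i, a i * p'' i) * β := by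
      intro a α β
      rw [Finset.sum_mul, Finset.sum_mul, ← Finset.sum_add_distrib]
      exact Finset.sum_congr rfl fun i _ => by ring
    have key := Matrix.exists_mulVec_eq_zero_iff
      (M := !![∑ i, a' i * p' i, ∑ i, a' i * p'' i; ∑ i, a'' i * p' i, ∑ i, a'' i * p'' i])
    rw [Matrix.det_fin_two_of] at key
    constructor
    · rintro ⟨α, β, hne, h1, h2⟩
      refine key.mp ⟨![α, β], ?_, ?_⟩
      · intro h
        exact hne ⟨congrFun h 0, congrFun h 1⟩
      · funext j
        fin_cases j
        · simpa [Matrix.mulVec, dotProduct, Fin.sum_univ_two, expand] using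
            (expand a' α β ▸ h1)
        · simpa [Matrix.mulVec, dotProduct, Fin.sum_univ_two, expand] using
            (expand a'' α β ▸ h2)
    · intro hdet
      obtain ⟨v, hv, hmul⟩ := key.mpr hdet
      refine ⟨v 0, v 1, ?_, ?_, ?_⟩
      · rintro ⟨h0, h1⟩
        apply hv
        funext j
        fin_cases j
        · exact h0
        · exact h1
      · rw [expand]
        have := congrFun hmul 0
        simpa [Matrix.mulVec, dotProduct, Fin.sum_univ_two] using this
      · rw [expand]
        have := congrFun hmul 1
        simpa [Matrix.mulVec, dotProduct, Fin.sum_univ_two] using this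
  · exact irred_D k
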